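/- Let α, β, γ, λ, μ be real numbers and let N(α,β,γ,λ,μ) be the 3×3 real matrix whose rows are (α,β,γ), (λα,λβ,λγ), (μα,μβ,μγ). Suppose α ≠ 0 and α² + λβ² + μγ² ≠ 0. If one of the following holds: (1) λ > 0, μ < 0 and α² + λβ² + μγ² > 0; (2) λ < 0, μ > 0, α² + λβ² < 0 and α² + λβ² + μγ² > 0; (3) λ < 0, μ > 0 and α² + λβ² > 0; (4) λ < 0, μ < 0, α² + λβ² > 0 and α² + λβ² + μγ² < 0; (5) λ < 0, μ < 0 and α² + λβ² < 0; (6) λ ≠ 0, μ ≠ 0 and α² + λβ² = 0; then the evolution algebra E_{N(α,β,γ,λ,μ)} is isomorphic to the evolution algebra E₈ whose structure matrix has rows (1,0,0), (1,0,0), (−1,0,0). -/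

import Mathlib

/-- Evolution algebra multiplication on ℝ³ determined by a structure matrix `A`:
`(x ∗_A y) j = ∑ i, x i * y i * A i j`. -/
def evolMul (A : Matrix (Fin 3) (Fin 3) ℝ) (x y : Fin 3 → ℝ) : Fin 3 → ℝ :=
  fun j => ∑ i, x i * y i * A i j

/-- The evolution algebras with structure matrices `A` and `B` are isomorphic:
there is an ℝ-linear equivalence of ℝ³ intertwining the two multiplications. -/
def EvolIso (A B : Matrix (Fin 3) (Fin 3) ℝ) : Prop :=
  ∃ f : (Fin 3 → ℝ) ≃ₗ[ℝ] (Fin 3 → ℝ),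
    ∀ x y, f (evolMul A x y) = evolMul B (f x) (f y)

lemma helper (a b c l m Q : ℝ) (M : Matrix (Fin 3) (Fin 3) ℝ)
    (hQ : Q ≠ 0) (hl : l ≠ 0) (hm : m ≠ 0)
    (h00 : M 0 0 * M 0 0 + M 1 0 * M 1 0 - M 2 0 * M 2 0 = Q)
    (h01 : M 0 0 * M 0 1 + M 1 0 * M 1 1 - M 2 0 * M 2 1 = 0)
    (h02 : M 0 0 * M 0 2 + M 1 0 * M 1 2 - M 2 0 * M 2 2 = 0)
    (h11 : M 0 1 * M 0 1 + M 1 1 * M 1 1 - M 2 1 * M 2 1 = Q * l)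
    (h12 : M 0 1 * M 0 2 + M 1 1 * M 1 2 - M 2 1 * M 2 2 = 0)
    (h22 : M 0 2 * M 0 2 + M 1 2 * M 1 2 - M 2 2 * M 2 2 = Q * m)
    (hv0 : M 0 0 * a + M 0 1 * b + M 0 2 * c = Q)
    (hv1 : M 1 0 * a + M 1 1 * b + M 1 2 * c = 0)
    (hv2 : M 2 0 * a + M 2 1 * b + M 2 2 * c = 0) :
    EvolIso (!![a, b, c; l * a, l * b, l * c; m * a, m * b, m * c] : Matrix (Fin 3) (Fin 3) ℝ)
      (!![1, 0, 0; 1, 0, 0; -1, 0, 0] : Matrix (Fin 3) (Fin 3) ℝ) := by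
  have hQ' : Q⁻¹ * Q = 1 := inv_mul_cancel₀ hQ
  have hl' : l⁻¹ * l = 1 := inv_mul_cancel₀ hl
  have hm' : m⁻¹ * m = 1 := inv_mul_cancel₀ hm
  set N : Matrix (Fin 3) (Fin 3) ℝ :=
    Q⁻¹ • !![M 0 0, M 1 0, -M 2 0;
             l⁻¹ * M 0 1, l⁻¹ * M 1 1, -(l⁻¹ * M 2 1);
             m⁻¹ * M 0 2, m⁻¹ * M 1 2, -(m⁻¹ * M 2 2)] with hN
  have hNM : N * M = 1 := by
    ext i j
    fin_cases i <;> fin_cases j <;>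
      simp [hN, Matrix.mul_apply, Fin.sum_univ_three, Matrix.one_apply]
    · linear_combination Q⁻¹ * h00 + hQ'
    · linear_combination Q⁻¹ * h01
    · linear_combination Q⁻¹ * h02
    · linear_combination Q⁻¹ * l⁻¹ * h01
    · linear_combination Q⁻¹ * l⁻¹ * h11 + (l⁻¹ * l) * hQ' + hl'
    · linear_combination Q⁻¹ * l⁻¹ * h12
    · linear_combination Q⁻¹ * m⁻¹ * h02
    · linear_combination Q⁻¹ * m⁻¹ * h12
    · linear_combination Q⁻¹ * m⁻¹ * h22 + (m⁻¹ * m) * hQ' + hm'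
  have hInv : Invertible M := invertibleOfLeftInverse M N hNM
  refine ⟨M.toLinearEquiv' hInv, fun x y => ?_⟩
  have happ : ∀ z, M.toLinearEquiv' hInv z = M.mulVec z := fun z => rfl
  funext j
  simp only [happ]
  fin_cases j <;>
    simp [evolMul, Matrix.mulVec, dotProduct, Fin.sum_univ_three]
  · linear_combination (x 0 * y 0 + l * (x 1 * y 1) + m * (x 2 * y 2)) * hv0 -
      (x 0 * y 0 * h00 + (x 0 * y 1 + x 1 * y 0) * h01 + (x 0 * y 2 + x 2 * y 0) * h02 +
       x 1 * y 1 * h11 + (x 1 * y 2 + x 2 * y 1) * h12 + x 2 * y 2 * h22)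
  · linear_combination (x 0 * y 0 + l * (x 1 * y 1) + m * (x 2 * y 2)) * hv1
  · linear_combination (x 0 * y 0 + l * (x 1 * y 1) + m * (x 2 * y 2)) * hv2

set_option maxHeartbeats 2000000 in
theorem stmt (a b c l m : ℝ)
    (ha : a ≠ 0) (hq : a ^ 2 + l * b ^ 2 + m * c ^ 2 ≠ 0)
    (hcond : (l > 0 ∧ m < 0 ∧ a ^ 2 + l * b ^ 2 + m * c ^ 2 > 0) ∨
             (l < 0 ∧ m > 0 ∧ a ^ 2 + l * b ^ 2 < 0 ∧ a ^ 2 + l * b ^ 2 + m * c ^ 2 > 0) ∨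
             (l < 0 ∧ m > 0 ∧ a ^ 2 + l * b ^ 2 > 0) ∨
             (l < 0 ∧ m < 0 ∧ a ^ 2 + l * b ^ 2 > 0 ∧ a ^ 2 + l * b ^ 2 + m * c ^ 2 < 0) ∨
             (l < 0 ∧ m < 0 ∧ a ^ 2 + l * b ^ 2 < 0) ∨
             (l ≠ 0 ∧ m ≠ 0 ∧ a ^ 2 + l * b ^ 2 = 0)) :
    EvolIso (!![a, b, c; l * a, l * b, l * c; m * a, m * b, m * c] : Matrix (Fin 3) (Fin 3) ℝ) (!![1, 0, 0; 1, 0, 0; -1, 0, 0] : Matrix (Fin 3) (Fin 3) ℝ) := by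
  have hl : l ≠ 0 := by
    rcases hcond with ⟨h1,_⟩|⟨h1,_⟩|⟨h1,_⟩|⟨h1,_⟩|⟨h1,_⟩|⟨h1,_⟩ <;>
      first | exact ne_of_gt h1 | exact ne_of_lt h1 | exact h1
  have hm : m ≠ 0 := by
    rcases hcond with ⟨_,h2,_⟩|⟨_,h2,_⟩|⟨_,h2,_⟩|⟨_,h2,_⟩|⟨_,h2,_⟩|⟨_,h2,_⟩ <;>
      first | exact ne_of_gt h2 | exact ne_of_lt h2 | exact h2
  by_cases hS0 : a ^ 2 + l * b ^ 2 = 0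
  · -- case 6
    have hb : b ≠ 0 := by
      intro h
      rw [h] at hS0
      exact ha (pow_eq_zero_iff two_ne_zero |>.mp (by linear_combination hS0))
    have hc : c ≠ 0 := by
      intro h; apply hq; rw [h]; linear_combination hS0
    have hlv : l = -(a ^ 2) / b ^ 2 := by
      rw [eq_div_iff (by positivity)]
      linear_combination hS0
    subst hlv
    refine helper a b c _ m _
      (!![a, (-(a ^ 2) / b ^ 2) * b, m * c;
          ((m^2*c^2 - a^2 - m*c^2)/(2*m*b*c)) * b + c, -(((m^2*c^2 - a^2 - m*c^2)/(2*m*b*c)) * a), -a;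
          ((m^2*c^2 + a^2 + m*c^2)/(2*m*b*c)) * b - c, -(((m^2*c^2 + a^2 + m*c^2)/(2*m*b*c)) * a), a])
      hq hl hm ?_ ?_ ?_ ?_ ?_ ?_ ?_ ?_ ?_
    all_goals
      simp only [Matrix.cons_val', Matrix.cons_val_zero, Matrix.cons_val_one, Matrix.head_cons,
        Matrix.empty_val', Matrix.cons_val_fin_one, Matrix.head_fin_const, Matrix.of_apply,
        Matrix.cons_val_two, Matrix.tail_cons]
      field_simp
      all_goals ring
  · -- S ≠ 0 cases
    have hlmQ : l * m * (a ^ 2 + l * b ^ 2 + m * c ^ 2) < 0 := by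
      rcases hcond with ⟨h1,h2,h3⟩|⟨h1,h2,h3,h4⟩|⟨h1,h2,h3⟩|⟨h1,h2,h3,h4⟩|⟨h1,h2,h3⟩|⟨h1,h2,h3⟩
      · nlinarith [mul_neg_of_neg_of_pos h2 (mul_pos h1 h3)]
      · nlinarith [mul_neg_of_neg_of_pos h1 (mul_pos h2 h4)]
      · have hQpos : 0 < a ^ 2 + l * b ^ 2 + m * c ^ 2 := by
          nlinarith [mul_nonneg h2.le (sq_nonneg c)]
        nlinarith [mul_neg_of_neg_of_pos h1 (mul_pos h2 hQpos)]
      · nlinarith [mul_neg_of_pos_of_neg (mul_pos_of_neg_of_neg h1 h2) h4]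
      · have hQneg : a ^ 2 + l * b ^ 2 + m * c ^ 2 < 0 := by
          nlinarith [mul_nonpos_of_nonpos_of_nonneg h2.le (sq_nonneg c)]
        nlinarith [mul_neg_of_pos_of_neg (mul_pos_of_neg_of_neg h1 h2) hQneg]
      · exact absurd h3 hS0
    have hSne : (a ^ 2 + l * b ^ 2) ≠ 0 := hS0
    have hSQ : l * (a ^ 2 + l * b ^ 2) * (a ^ 2 + l * b ^ 2 + m * c ^ 2) ≠ 0 :=
      mul_ne_zero (mul_ne_zero hl hSne) hq
    rcases hSQ.lt_or_gt with hB | hA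
    · -- subcase B : l S Q < 0
      have hmS : 0 < m * (a ^ 2 + l * b ^ 2) := by
        nlinarith [mul_pos_of_neg_of_neg hlmQ hB,
          sq_nonneg (l * (a ^ 2 + l * b ^ 2 + m * c ^ 2))]
      have hs0 : 0 ≤ -(l * (a ^ 2 + l * b ^ 2 + m * c ^ 2)) / (a ^ 2 + l * b ^ 2) := by
        have h1 : -(l * (a ^ 2 + l * b ^ 2 + m * c ^ 2)) / (a ^ 2 + l * b ^ 2)
            = (-(l * (a ^ 2 + l * b ^ 2) * (a ^ 2 + l * b ^ 2 + m * c ^ 2))) / (a ^ 2 + l * b ^ 2) ^ 2 := by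
          field_simp
        rw [h1]
        exact div_nonneg (by linarith) (sq_nonneg _)
      have ht0 : 0 ≤ m / (a ^ 2 + l * b ^ 2) := by
        have h1 : m / (a ^ 2 + l * b ^ 2) = (m * (a ^ 2 + l * b ^ 2)) / (a ^ 2 + l * b ^ 2) ^ 2 := by
          field_simp
        rw [h1]
        exact div_nonneg hmS.le (sq_nonneg _)
      set s : ℝ := Real.sqrt (-(l * (a ^ 2 + l * b ^ 2 + m * c ^ 2)) / (a ^ 2 + l * b ^ 2)) with hs
      have hs2 : s ^ 2 * (a ^ 2 + l * b ^ 2) = -(l * (a ^ 2 + l * b ^ 2 + m * c ^ 2)) := by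
        rw [hs, Real.sq_sqrt hs0]
        field_simp
      set t : ℝ := Real.sqrt (m / (a ^ 2 + l * b ^ 2)) with hts
      have ht2 : t ^ 2 * (a ^ 2 + l * b ^ 2) = m := by
        rw [hts, Real.sq_sqrt ht0]
        field_simp
      refine helper a b c l m _
        (!![a, l * b, m * c;
            t * (a * c), t * (l * b * c), -(t * (a ^ 2 + l * b ^ 2));
            s * b, -(s * a), 0]) hq hl hm ?_ ?_ ?_ ?_ ?_ ?_ ?_ ?_ ?_ <;>
        simp only [Matrix.cons_val', Matrix.cons_val_zero, Matrix.cons_val_one, Matrix.head_cons,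
          Matrix.empty_val', Matrix.cons_val_fin_one, Matrix.head_fin_const, Matrix.of_apply,
          Matrix.cons_val_two, Matrix.tail_cons]
      · apply mul_right_cancel₀ hSne
        linear_combination a ^ 2 * c ^ 2 * ht2 - b ^ 2 * hs2
      · apply mul_right_cancel₀ hSne
        linear_combination l * a * b * c ^ 2 * ht2 + a * b * hs2
      · linear_combination (-(a * c)) * ht2
      · apply mul_right_cancel₀ hSne
        linear_combination l ^ 2 * b ^ 2 * c ^ 2 * ht2 - a ^ 2 * hs2
      · linear_combination (-(l * b * c)) * ht2
      · linear_combination (a ^ 2 + l * b ^ 2) * ht2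
      · ring
      · ring
      · ring
    · -- subcase A : l S Q > 0
      have hmS : m * (a ^ 2 + l * b ^ 2) < 0 := by
        nlinarith [mul_neg_of_neg_of_pos hlmQ hA,
          sq_nonneg (l * (a ^ 2 + l * b ^ 2 + m * c ^ 2))]
      have hs0 : 0 ≤ l * (a ^ 2 + l * b ^ 2 + m * c ^ 2) / (a ^ 2 + l * b ^ 2) := by
        have h1 : l * (a ^ 2 + l * b ^ 2 + m * c ^ 2) / (a ^ 2 + l * b ^ 2)
            = (l * (a ^ 2 + l * b ^ 2) * (a ^ 2 + l * b ^ 2 + m * c ^ 2)) / (a ^ 2 + l * b ^ 2) ^ 2 := by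
          field_simp
        rw [h1]
        exact div_nonneg hA.le (sq_nonneg _)
      have ht0 : 0 ≤ -m / (a ^ 2 + l * b ^ 2) := by
        have h1 : -m / (a ^ 2 + l * b ^ 2) = (-(m * (a ^ 2 + l * b ^ 2))) / (a ^ 2 + l * b ^ 2) ^ 2 := by
          field_simp
        rw [h1]
        exact div_nonneg (by linarith) (sq_nonneg _)
      set s : ℝ := Real.sqrt (l * (a ^ 2 + l * b ^ 2 + m * c ^ 2) / (a ^ 2 + l * b ^ 2)) with hs
      have hs2 : s ^ 2 * (a ^ 2 + l * b ^ 2) = l * (a ^ 2 + l * b ^ 2 + m * c ^ 2) := by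
        rw [hs, Real.sq_sqrt hs0]
        field_simp
      set t : ℝ := Real.sqrt (-m / (a ^ 2 + l * b ^ 2)) with hts
      have ht2 : t ^ 2 * (a ^ 2 + l * b ^ 2) = -m := by
        rw [hts, Real.sq_sqrt ht0]
        field_simp
      refine helper a b c l m _
        (!![a, l * b, m * c;
            s * b, -(s * a), 0;
            t * (a * c), t * (l * b * c), -(t * (a ^ 2 + l * b ^ 2))]) hq hl hm ?_ ?_ ?_ ?_ ?_ ?_ ?_ ?_ ?_ <;>
        simp only [Matrix.cons_val', Matrix.cons_val_zero, Matrix.cons_val_one, Matrix.head_cons,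
          Matrix.empty_val', Matrix.cons_val_fin_one, Matrix.head_fin_const, Matrix.of_apply,
          Matrix.cons_val_two, Matrix.tail_cons]
      · apply mul_right_cancel₀ hSne
        linear_combination b ^ 2 * hs2 - a ^ 2 * c ^ 2 * ht2
      · apply mul_right_cancel₀ hSne
        linear_combination (-(a * b)) * hs2 - l * a * b * c ^ 2 * ht2
      · linear_combination a * c * ht2
      · apply mul_right_cancel₀ hSne
        linear_combination a ^ 2 * hs2 - l ^ 2 * b ^ 2 * c ^ 2 * ht2
      · linear_combination l * b * c * ht2
      · linear_combination (-(a ^ 2 + l * b ^ 2)) * ht2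
      · ring
      · ring
      · ring
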